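/- Let R be a commutative ring of characteristic 0 with fraction field K, let m ≥ 1 be an integer, and let f(x) = x·Σ_{k≥0} (a_k/(m^k·k!)) x^k ∈ K[[x]] with a_0 = 1 and a_k ∈ R for all k. Then the compositional inverse f^{-1}(x) ∈ x + x²K[[x]] is also of the form x·Σ_{k≥0} (b_k/(m^k·k!)) x^k with b_0 = 1 and b_k ∈ R for all k. -/

import Mathlib

/-- Composition `f(g(x))` of formal power series, intended for `g` with zero
constant coefficient. -/
noncomputable def PowerSeries.comp {K : Type*} [CommSemiring K] (f g : PowerSeries K) :
    PowerSeries K :=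
  PowerSeries.mk fun n =>
    PowerSeries.coeff n
      (∑ k ∈ Finset.range (n + 1), PowerSeries.C (PowerSeries.coeff k f) * g ^ k)

/-- If `g` has zero constant term, `coeff n (g ^ k) = 0` for `n < k`. -/
lemma aux_coeff_pow_zero {K : Type*} [CommRing K] {g : PowerSeries K}
    (hg0 : PowerSeries.coeff 0 g = 0) :
    ∀ k n, n < k → PowerSeries.coeff n (g ^ k) = 0 := by
  intro k
  induction k with
  | zero => omega
  | succ k ih =>
    intro n hn
    rw [pow_succ, PowerSeries.coeff_mul]
    apply Finset.sum_eq_zero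
    rintro ⟨p, q⟩ hpq
    rw [Finset.HasAntidiagonal.mem_antidiagonal] at hpq
    rcases lt_or_ge p k with h | h
    · rw [ih p h, zero_mul]
    · have : q = 0 := by omega
      subst this
      rw [hg0, mul_zero]

lemma aux_pow_mem {K : Type*} [CommRing K] (S : Subring K) (m : ℕ) {g : PowerSeries K}
    (hg0 : PowerSeries.coeff 0 g = 0) (n0 : ℕ)
    (hyp : ∀ j < n0, ((m : K) ^ j * (Nat.factorial j : K)) * PowerSeries.coeff (j + 1) g ∈ S) :
    ∀ k, 1 ≤ k → ∀ n, n + 1 ≤ n0 + k →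
      ((m : K) ^ (n - k) * (Nat.factorial (n - k) : K)) * PowerSeries.coeff n (g ^ k) ∈ S := by
  intro k hk
  induction k, hk using Nat.le_induction with
  | base =>
    intro n hn
    match n with
    | 0 => simpa [hg0] using S.zero_mem
    | j + 1 =>
      simpa using hyp j (by omega)
  | succ k hk ih =>
    intro n hn
    rw [pow_succ, PowerSeries.coeff_mul, Finset.mul_sum]
    apply Subring.sum_mem
    rintro ⟨p, q⟩ hpq
    rw [Finset.HasAntidiagonal.mem_antidiagonal] at hpq
    rcases lt_or_ge p k with h | h
    · rw [aux_coeff_pow_zero hg0 k p h, zero_mul, mul_zero]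
      exact S.zero_mem
    rcases Nat.eq_zero_or_pos q with h0 | h0
    · subst h0; rw [hg0, mul_zero, mul_zero]; exact S.zero_mem
    · -- p ≥ k, q ≥ 1
      have hq : q - 1 < n0 := by omega
      have h1 := ih p (by omega)
      have h2 := hyp (q - 1) hq
      have hq1 : q - 1 + 1 = q := by omega
      rw [hq1] at h2
      have hfac : Nat.factorial (n - (k + 1)) =
          Nat.choose (n - (k + 1)) (q - 1) * Nat.factorial (p - k) * Nat.factorial (q - 1) := by
        have hij : (p - k) + (q - 1) = n - (k + 1) := by omega
        rw [← hij]
        exact (Nat.add_choose_mul_factorial_mul_factorial (p - k) (q - 1)).symm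
      have hmp : (m : K) ^ (n - (k + 1)) = (m : K) ^ (p - k) * (m : K) ^ (q - 1) := by
        rw [← pow_add]; congr 1; omega
      have key : ((m : K) ^ (n - (k+1)) * (Nat.factorial (n - (k+1)) : K)) *
          (PowerSeries.coeff p (g ^ k) * PowerSeries.coeff q g)
          = (Nat.choose (n - (k + 1)) (q - 1) : K) *
            ((((m : K) ^ (p - k) * (Nat.factorial (p - k) : K)) * PowerSeries.coeff p (g ^ k)) *
             (((m : K) ^ (q - 1) * (Nat.factorial (q - 1) : K)) * PowerSeries.coeff q g)) := by
        rw [hmp, hfac]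
        push_cast
        ring
      rw [key]
      exact S.mul_mem (natCast_mem S _) (S.mul_mem h1 h2)


/-- If `f(x) = x ∑ (a_k/(m^k·k!)) x^k` with `a_0 = 1` and all
`a_k ∈ R`, then the compositional inverse `f⁻¹` has the same shape:
`x ∑ (b_k/(m^k·k!)) x^k` with `b_0 = 1` and all `b_k ∈ R`. -/
theorem inverse_of_m_factorial_type {R K : Type*} [CommRing R] [CharZero R]
    [Field K] [Algebra R K] [IsFractionRing R K]
    (m : ℕ) (hm : 1 ≤ m)
    (f : PowerSeries K) (hf0 : PowerSeries.coeff 0 f = 0)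
    (a : ℕ → R) (ha0 : a 0 = 1)
    (ha : ∀ k, PowerSeries.coeff (k + 1) f
      = algebraMap R K (a k) / ((m : K) ^ k * (Nat.factorial k : K)))
    (g : PowerSeries K) (hg0 : PowerSeries.coeff 0 g = 0)
    (hg1 : PowerSeries.coeff 1 g = 1)
    (hginv : f.comp g = PowerSeries.X) :
    ∃ b : ℕ → R, b 0 = 1 ∧ ∀ k,
      PowerSeries.coeff (k + 1) g
        = algebraMap R K (b k) / ((m : K) ^ k * (Nat.factorial k : K)) := by
  haveI : CharZero K := charZero_of_injective_algebraMap (IsFractionRing.injective R K)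
  have hm0 : (m : K) ≠ 0 := Nat.cast_ne_zero.mpr (by omega)
  have hfacne : ∀ k : ℕ, (Nat.factorial k : K) ≠ 0 :=
    fun k => Nat.cast_ne_zero.mpr (Nat.factorial_ne_zero k)
  set S : Subring K := (algebraMap R K).range with hS
  -- coefficient equation from `f.comp g = X`
  have hf1 : PowerSeries.coeff 1 f = 1 := by
    rw [ha 0, ha0]; simp
  have hcomp : ∀ n, (∑ k ∈ Finset.range (n + 1),
      PowerSeries.coeff k f * PowerSeries.coeff n (g ^ k)) = PowerSeries.coeff n PowerSeries.X := by
    intro n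
    have := congrArg (PowerSeries.coeff n) hginv
    rw [PowerSeries.comp, PowerSeries.coeff_mk, map_sum] at this
    simpa [PowerSeries.coeff_C_mul] using this
  have main : ∀ n, ((m : K) ^ n * (Nat.factorial n : K)) * PowerSeries.coeff (n + 1) g ∈ S := by
    intro n
    induction n using Nat.strong_induction_on with
    | _ n ih =>
      match n with
      | 0 => simpa [hg1] using S.one_mem
      | n + 1 =>
        have h := hcomp (n + 2)
        rw [Finset.sum_range_succ', Finset.sum_range_succ'] at h
        have hX : PowerSeries.coeff (n + 2) (PowerSeries.X : PowerSeries K) = 0 := by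
          simp [PowerSeries.coeff_X]
        rw [hX, hf0, hf1] at h
        simp only [zero_mul, add_zero, zero_add, pow_one, one_mul] at h
        -- h : ∑ i ∈ range (n+1), coeff (i+2) f * coeff (n+2) (g^(i+2)) + coeff (n+2) g = 0
        have hg : PowerSeries.coeff (n + 2) g =
            -∑ i ∈ Finset.range (n + 1),
              PowerSeries.coeff (i + 1 + 1) f * PowerSeries.coeff (n + 2) (g ^ (i + 1 + 1)) := by
          linear_combination h
        rw [hg, mul_neg, Finset.mul_sum]
        apply S.neg_mem
        apply Subring.sum_mem
        intro i hi
        rw [Finset.mem_range] at hi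
        have h1 : ((m : K) ^ (n - i) * (Nat.factorial (n - i) : K)) *
            PowerSeries.coeff (n + 2) (g ^ (i + 2)) ∈ S := by
          have := aux_pow_mem S m hg0 (n + 1)
            (fun j hj => ih j (by omega)) (i + 2) (by omega) (n + 2) (by omega)
          have he : n + 2 - (i + 2) = n - i := by omega
          rwa [he] at this
        rw [ha (i + 1)]
        have hfac : (Nat.factorial (n + 1) : K) = (Nat.choose (n + 1) (n - i) : K) *
            (Nat.factorial (i + 1) : K) * (Nat.factorial (n - i) : K) := by
          have hij : (i + 1) + (n - i) = n + 1 := by omega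
          have := Nat.add_choose_mul_factorial_mul_factorial (i + 1) (n - i)
          rw [hij] at this
          exact_mod_cast this.symm
        have hmp : (m : K) ^ (n + 1) = (m : K) ^ (i + 1) * (m : K) ^ (n - i) := by
          rw [← pow_add]; congr 1; omega
        have key : ((m : K) ^ (n + 1) * (Nat.factorial (n + 1) : K)) *
            (algebraMap R K (a (i + 1)) / ((m : K) ^ (i + 1) * (Nat.factorial (i + 1) : K)) *
              PowerSeries.coeff (n + 2) (g ^ (i + 1 + 1)))
            = (Nat.choose (n + 1) (n - i) : K) * (algebraMap R K (a (i + 1)) *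
              (((m : K) ^ (n - i) * (Nat.factorial (n - i) : K)) *
                PowerSeries.coeff (n + 2) (g ^ (i + 2)))) := by
          have hd : (m : K) ^ (i + 1) * (Nat.factorial (i + 1) : K) ≠ 0 :=
            mul_ne_zero (pow_ne_zero _ hm0) (hfacne _)
          rw [div_mul_eq_mul_div, mul_div_assoc', div_eq_iff hd, hmp, hfac]
          ring
        rw [key]
        exact S.mul_mem (natCast_mem S _)
          (S.mul_mem (RingHom.mem_range_self _ _) h1)
  choose c hc using fun n => (main n)
  refine ⟨fun n => if n = 0 then 1 else c n, if_pos rfl, fun k => ?_⟩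
  match k with
  | 0 => simp [hg1]
  | k + 1 =>
    have hb : (fun n => if n = 0 then (1 : R) else c n) (k + 1) = c (k + 1) := by simp
    rw [hb]
    rw [eq_div_iff (mul_ne_zero (pow_ne_zero _ hm0) (hfacne _)), mul_comm]
    exact (hc (k + 1)).symm
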